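/- Let n ≥ 1, let H, A, B be n×n complex matrices, let β > 0, T > 0, and let η ∈ ℝ be such that β·η ∈ 2πℤ. For z ∈ ℂ define A(z) := exp(izH)·A·exp(−izH) (matrix exponentials). Then ∫_{−T}^{0} e^{ηt} · Tr( exp(−βH) · (A(t)B − B A(t)) ) dt = i ∫_{0}^{β} e^{−iηs} · Tr( exp(−βH) · A(−is) · B ) ds − i e^{−ηT} ∫_{0}^{β} e^{−iηs} · Tr( exp(−βH) · A(−T−is) · B ) ds. -/

import Mathlib

open Matrix MeasureTheory intervalIntegral

/-- The complex-time Heisenberg evolution `A(z) = exp(izH) A exp(−izH)` of a matrix. -/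
noncomputable def heisenberg {n : ℕ} (H A : Matrix (Fin n) (Fin n) ℂ) (z : ℂ) :
    Matrix (Fin n) (Fin n) ℂ :=
  NormedSpace.exp ((Complex.I * z) • H) * A * NormedSpace.exp ((-(Complex.I * z)) • H)

section aux
attribute [local instance] Matrix.linftyOpNormedRing Matrix.linftyOpNormedAlgebra

variable {n : ℕ}

lemma wick_exp_smul_add (H : Matrix (Fin n) (Fin n) ℂ) (x y : ℂ) :
    NormedSpace.exp ((x + y) • H) = NormedSpace.exp (x • H) * NormedSpace.exp (y • H) := by
  rw [add_smul]
  exact NormedSpace.exp_add_of_commute (((Commute.refl H).smul_left x).smul_right y)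

lemma wick_diff (H A B : Matrix (Fin n) (Fin n) ℂ) (β η : ℝ) :
    Differentiable ℂ (fun z : ℂ => Complex.exp (η * z) *
      (NormedSpace.exp ((-(β : ℂ)) • H) * heisenberg H A z * B).trace) := by
  have hE : Differentiable ℂ (fun z : ℂ => NormedSpace.exp (z • H)) :=
    fun z => (hasDerivAt_exp_smul_const H z).differentiableAt
  have h1 : Differentiable ℂ (fun z : ℂ => Complex.I * z) := by fun_prop
  have hE1 : Differentiable ℂ (fun z : ℂ => NormedSpace.exp ((Complex.I * z) • H)) :=
    hE.comp h1
  have hE2 : Differentiable ℂ (fun z : ℂ => NormedSpace.exp ((-(Complex.I * z)) • H)) :=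
    hE.comp h1.neg
  have hM : Differentiable ℂ (fun z : ℂ =>
      NormedSpace.exp ((-(β : ℂ)) • H) * heisenberg H A z * B) := by
    unfold heisenberg
    exact (((differentiable_const _).mul
      ((hE1.mul (differentiable_const A)).mul hE2)).mul (differentiable_const B))
  have htr : Differentiable ℂ (fun z : ℂ =>
      (NormedSpace.exp ((-(β : ℂ)) • H) * heisenberg H A z * B).trace) :=
    (LinearMap.toContinuousLinearMap (Matrix.traceLinearMap (Fin n) ℂ ℂ)).differentiable.comp hM
  exact (((differentiable_const (η : ℂ)).mul differentiable_id).cexp).mul htr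

lemma wick_kms (H A B : Matrix (Fin n) (Fin n) ℂ) (β : ℝ) (x : ℂ) :
    (NormedSpace.exp ((-(β : ℂ)) • H) * heisenberg H A (x - (β : ℂ) * Complex.I) * B).trace
      = (NormedSpace.exp ((-(β : ℂ)) • H) * (B * heisenberg H A x)).trace := by
  have e1 : Complex.I * (x - (β : ℂ) * Complex.I) = (β : ℂ) + Complex.I * x := by
    linear_combination (-(β : ℂ)) * Complex.I_sq
  have e2 : -((β : ℂ) + Complex.I * x) = -(Complex.I * x) + (-(β : ℂ)) := by ring
  have h1 : heisenberg H A (x - (β : ℂ) * Complex.I)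
      = NormedSpace.exp ((β : ℂ) • H) * heisenberg H A x
          * NormedSpace.exp ((-(β : ℂ)) • H) := by
    unfold heisenberg
    rw [e1, e2, wick_exp_smul_add, wick_exp_smul_add]
    simp only [mul_assoc]
  have hinv : NormedSpace.exp ((-(β : ℂ)) • H) * NormedSpace.exp ((β : ℂ) • H) = 1 := by
    rw [← wick_exp_smul_add]
    norm_num [NormedSpace.exp_zero]
  rw [h1]
  have h2 : NormedSpace.exp ((-(β : ℂ)) • H) *
      (NormedSpace.exp ((β : ℂ) • H) * heisenberg H A x
        * NormedSpace.exp ((-(β : ℂ)) • H)) * B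
      = (NormedSpace.exp ((-(β : ℂ)) • H) * NormedSpace.exp ((β : ℂ) • H)) *
          (heisenberg H A x * (NormedSpace.exp ((-(β : ℂ)) • H) * B)) := by
    simp only [mul_assoc]
  rw [h2, hinv, one_mul, Matrix.trace_mul_comm, mul_assoc]

end aux

/-- Wick rotation for finite-dimensional quantum systems: if `β·η ∈ 2πℤ`, the real-time
response integral of the commutator against `e^{ηt}` over `[−T,0]` equals the
imaginary-time (Euclidean) correlation integral plus an explicit boundary term at real
time `−T`. -/
theorem wick_rotation_identity (n : ℕ) (hn : 1 ≤ n)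
    (H A B : Matrix (Fin n) (Fin n) ℂ)
    (β T : ℝ) (hβ : 0 < β) (hT : 0 < T)
    (η : ℝ) (hη : ∃ m : ℤ, β * η = 2 * Real.pi * m) :
    (∫ t in (-T)..(0 : ℝ), ((Real.exp (η * t) : ℝ) : ℂ) *
        (NormedSpace.exp ((-(β : ℂ)) • H) *
          (heisenberg H A (t : ℂ) * B - B * heisenberg H A (t : ℂ))).trace) =
      Complex.I * (∫ s in (0 : ℝ)..β, Complex.exp (-Complex.I * η * s) *
          (NormedSpace.exp ((-(β : ℂ)) • H) *
            heisenberg H A (-Complex.I * s) * B).trace)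
      - Complex.I * ((Real.exp (-(η * T)) : ℝ) : ℂ) *
          (∫ s in (0 : ℝ)..β, Complex.exp (-Complex.I * η * s) *
            (NormedSpace.exp ((-(β : ℂ)) • H) *
              heisenberg H A ((-T : ℂ) - Complex.I * s) * B).trace) := by
  obtain ⟨m, hm⟩ := hη
  set g : ℂ → ℂ := fun z => Complex.exp (η * z) *
    (NormedSpace.exp ((-(β : ℂ)) • H) * heisenberg H A z * B).trace with hgdef
  have hgdiff : Differentiable ℂ g := wick_diff H A B β η
  have hgcont : Continuous g := hgdiff.continuous
  -- phase periodicity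
  have hone : Complex.exp (-(↑η * ↑β * Complex.I)) = 1 := by
    have hβη : ((η : ℂ)) * (β : ℂ) = 2 * Real.pi * m := by
      have h0 : ((β * η : ℝ) : ℂ) = ((2 * Real.pi * (m : ℝ) : ℝ) : ℂ) := by
        exact_mod_cast congrArg (fun x : ℝ => (x : ℂ)) hm
      push_cast at h0
      linear_combination h0
    rw [hβη]
    have h1 := Complex.exp_int_mul_two_pi_mul_I (-m)
    rw [← h1]
    congr 1
    push_cast
    ring
  have hphase : ∀ z : ℂ, Complex.exp (↑η * (z - ↑β * Complex.I)) = Complex.exp (↑η * z) := by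
    intro z
    rw [show (↑η : ℂ) * (z - ↑β * Complex.I) = ↑η * z + -(↑η * ↑β * Complex.I) by ring,
      Complex.exp_add, hone, mul_one]
  -- edge identity
  have hedge : ∀ t : ℝ, ((Real.exp (η * t) : ℝ) : ℂ) *
      (NormedSpace.exp ((-(β : ℂ)) • H) *
        (heisenberg H A (t : ℂ) * B - B * heisenberg H A (t : ℂ))).trace
        = g (t : ℂ) - g ((t : ℂ) - ↑β * Complex.I) := by
    intro t
    simp only [hgdef]
    rw [wick_kms H A B β (t : ℂ), hphase (t : ℂ), Complex.ofReal_exp]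
    rw [mul_sub, Matrix.trace_sub,
      show NormedSpace.exp ((-(β : ℂ)) • H) * (heisenberg H A (t : ℂ) * B)
          = NormedSpace.exp ((-(β : ℂ)) • H) * heisenberg H A (t : ℂ) * B from
        (mul_assoc _ _ _).symm]
    push_cast
    ring
  have c1 : Continuous fun t : ℝ => g (t : ℂ) := hgcont.comp Complex.continuous_ofReal
  have c2 : Continuous fun t : ℝ => g ((t : ℂ) - ↑β * Complex.I) :=
    hgcont.comp (by continuity)
  have hsplit : (∫ t in (-T)..(0 : ℝ), ((Real.exp (η * t) : ℝ) : ℂ) *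
      (NormedSpace.exp ((-(β : ℂ)) • H) *
        (heisenberg H A (t : ℂ) * B - B * heisenberg H A (t : ℂ))).trace)
      = (∫ t in (-T)..(0 : ℝ), g (t : ℂ))
        - ∫ t in (-T)..(0 : ℝ), g ((t : ℂ) - ↑β * Complex.I) := by
    rw [← intervalIntegral.integral_sub (c1.intervalIntegrable _ _) (c2.intervalIntegrable _ _)]
    exact intervalIntegral.integral_congr fun t _ => hedge t
  -- rectangle
  have hrect := Complex.integral_boundary_rect_eq_zero_of_differentiableOn g
      ((-T : ℝ) : ℂ) (-(↑β * Complex.I)) hgdiff.differentiableOn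
  simp only [Complex.ofReal_re, Complex.ofReal_im, Complex.neg_re, Complex.neg_im,
    Complex.mul_I_re, Complex.mul_I_im, Complex.ofReal_neg, neg_zero, neg_neg,
    Complex.ofReal_zero, zero_mul, add_zero, zero_add, smul_eq_mul, neg_mul,
    ← sub_eq_add_neg] at hrect
  rw [intervalIntegral.integral_symm (-β) 0 (f := fun y : ℝ => g (↑y * Complex.I)),
    intervalIntegral.integral_symm (-β) 0
      (f := fun y : ℝ => g (-(T : ℂ) + ↑y * Complex.I))] at hrect
  -- first RHS integral
  have hR : (∫ s in (0 : ℝ)..β, Complex.exp (-Complex.I * η * s) *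
      (NormedSpace.exp ((-(β : ℂ)) • H) *
        heisenberg H A (-Complex.I * s) * B).trace)
      = ∫ y in (-β)..(0 : ℝ), g (↑y * Complex.I) := by
    have h := intervalIntegral.integral_comp_neg (a := 0) (b := β)
      (fun y : ℝ => g (↑y * Complex.I))
    rw [neg_zero] at h
    rw [← h]
    apply intervalIntegral.integral_congr
    intro s _
    simp only [hgdef]
    rw [show ((-s : ℝ) : ℂ) * Complex.I = -Complex.I * ↑s by push_cast; ring]
    rw [show (↑η : ℂ) * (-Complex.I * ↑s) = -Complex.I * ↑η * ↑s by ring]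
  -- second RHS integral
  have hS : ((Real.exp (-(η * T)) : ℝ) : ℂ) * (∫ s in (0 : ℝ)..β,
      Complex.exp (-Complex.I * η * s) *
      (NormedSpace.exp ((-(β : ℂ)) • H) *
        heisenberg H A ((-T : ℂ) - Complex.I * s) * B).trace)
      = ∫ y in (-β)..(0 : ℝ), g (-(T : ℂ) + ↑y * Complex.I) := by
    rw [← intervalIntegral.integral_const_mul]
    have h := intervalIntegral.integral_comp_neg (a := 0) (b := β)
      (fun y : ℝ => g (-(T : ℂ) + ↑y * Complex.I))
    rw [neg_zero] at h
    rw [← h]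
    apply intervalIntegral.integral_congr
    intro s _
    simp only [hgdef]
    rw [show -(T : ℂ) + ((-s : ℝ) : ℂ) * Complex.I = (-T : ℂ) - Complex.I * ↑s by
      push_cast; ring]
    rw [show (↑η : ℂ) * ((-T : ℂ) - Complex.I * ↑s)
        = ↑(-(η * T)) + -Complex.I * ↑η * ↑s by push_cast; ring,
      Complex.exp_add, Complex.ofReal_exp]
    ring
  rw [hsplit, hR, mul_assoc Complex.I, hS]
  linear_combination hrect
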